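/- Fix d ≥ 1 and m ∈ ℕ. The ℝ-submodule S_m of vector fields v : Fin d → MvPolynomial (Fin d) ℝ whose components have total degree at most m and which satisfy pderiv i (v j) = pderiv j (v i) for all i, j, is finite dimensional with dimension Nat.choose (d + m + 1) d − 1. -/

import Mathlib

open MvPolynomial

/-- The space `S_m` of irrotational polynomial vector fields of degree at
most `m` in `d` variables: each component has total degree at most `m` and
the formal Jacobian is symmetric (curl-free condition). -/
noncomputable def irrotationalSpace (d m : ℕ) :
    Submodule ℝ (Fin d → MvPolynomial (Fin d) ℝ) where
  carrier := {v | (∀ i : Fin d, (v i).totalDegree ≤ m) ∧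
    ∀ i j : Fin d, pderiv i (v j) = pderiv j (v i)}
  add_mem' := by
    rintro a b ⟨ha1, ha2⟩ ⟨hb1, hb2⟩
    refine ⟨fun i => ?_, fun i j => ?_⟩
    · exact le_trans (totalDegree_add (a i) (b i))
        (max_le (ha1 i) (hb1 i))
    · simp only [Pi.add_apply, map_add, ha2 i j, hb2 i j]
  zero_mem' := by
    refine ⟨fun i => ?_, fun i j => ?_⟩ <;> simp
  smul_mem' := by
    rintro c a ⟨ha1, ha2⟩
    refine ⟨fun i => ?_, fun i j => ?_⟩
    · exact le_trans (totalDegree_smul_le c (a i)) (ha1 i)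
    · simp [ha2 i j]

noncomputable def scOp (d c : ℕ) : MvPolynomial (Fin d) ℝ →ₗ[ℝ] MvPolynomial (Fin d) ℝ :=
  (Finsupp.lsum ℝ fun s => (((s.sum fun _ e => e : ℕ) : ℝ) + c)⁻¹ • (monomial s)).comp
    (AddMonoidAlgebra.coeffLinearEquiv ℝ).toLinearMap

theorem scOp_monomial (d c : ℕ) (s : Fin d →₀ ℕ) (a : ℝ) :
    scOp d c (monomial s a) = (((s.sum fun _ e => e : ℕ) : ℝ) + c)⁻¹ • monomial s a :=
  Finsupp.lsum_single ℝ _ _ _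

theorem sub_single_add {d : ℕ} (s : Fin d →₀ ℕ) (j : Fin d) (h : s j ≠ 0) :
    (s - Finsupp.single j 1) + Finsupp.single j 1 = s := by
  ext k
  by_cases hk : j = k
  · subst hk
    simp only [Finsupp.coe_add, Finsupp.coe_tsub, Pi.add_apply, Pi.sub_apply,
      Finsupp.single_eq_same]
    omega
  · simp [Finsupp.single_apply, hk]

theorem deg_sub_single {d : ℕ} (s : Fin d →₀ ℕ) (j : Fin d) (h : s j ≠ 0) :
    ((s - Finsupp.single j 1).sum fun _ e => e) + 1 = s.sum fun _ e => e := by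
  conv_rhs => rw [← sub_single_add s j h]
  rw [Finsupp.sum_add_index' (fun _ => rfl) (fun _ _ _ => rfl),
    Finsupp.sum_single_index rfl]

theorem pderiv_scOp {d : ℕ} (j : Fin d) (q : MvPolynomial (Fin d) ℝ) :
    pderiv j (scOp d 1 q) = scOp d 2 (pderiv j q) := by
  induction q using MvPolynomial.induction_on' with
  | add p q hp hq => simp [map_add, hp, hq]
  | monomial s a =>
    rw [scOp_monomial, Derivation.map_smul, pderiv_monomial, scOp_monomial]
    by_cases h : s j = 0
    · simp [h]
    · have hd := deg_sub_single s j h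
      congr 1
      push_cast [← hd]
      ring_nf

theorem sum_X_mul_scOp {d : ℕ} (q : MvPolynomial (Fin d) ℝ) :
    ∑ i : Fin d, X i * scOp d 2 (pderiv i q) = q - scOp d 1 q := by
  induction q using MvPolynomial.induction_on' with
  | add p q hp hq =>
    simp only [map_add]
    rw [Finset.sum_congr rfl (fun i _ => mul_add (X i) _ _), Finset.sum_add_distrib, hp, hq]
    ring
  | monomial s a =>
    have hterm : ∀ i : Fin d, X i * scOp d 2 (pderiv i (monomial s a)) =
        (((s.sum fun _ e => e : ℕ) : ℝ) + 1)⁻¹ • monomial s (a * (s i : ℝ)) := by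
      intro i
      rw [pderiv_monomial, scOp_monomial]
      by_cases h : s i = 0
      · simp [h]
      · have hd := deg_sub_single s i h
        rw [mul_smul_comm, X, monomial_mul, one_mul,
          add_comm (Finsupp.single i 1) (s - Finsupp.single i 1), sub_single_add s i h]
        congr 2
        push_cast [← hd]
        ring
    rw [Finset.sum_congr rfl (fun i _ => hterm i), ← Finset.smul_sum]
    have hsum : ∑ i : Fin d, monomial s (a * (s i : ℝ)) =
        monomial s (a * ((s.sum fun _ e => e : ℕ) : ℝ)) := by
      rw [← map_sum (monomial s), ← Finset.mul_sum]
      congr 2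
      rw [Finsupp.sum_fintype]
      · push_cast
        rfl
      · intro _; rfl
    rw [hsum, scOp_monomial, smul_monomial, smul_monomial, ← map_sub]
    congr 1
    have h0 : ((s.sum fun (_ : Fin d) b => (b:ℝ)) + 1) ≠ 0 := by
      have hc : (s.sum fun (_ : Fin d) b => (b:ℝ)) = ((s.sum fun _ b => b : ℕ) : ℝ) := by
        rw [Finsupp.sum, Finsupp.sum]
        push_cast
        rfl
      rw [hc]
      positivity
    rw [smul_eq_mul, smul_eq_mul]
    push_cast
    field_simp
    ring

theorem scOp_apply {d c : ℕ} (q : MvPolynomial (Fin d) ℝ) :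
    scOp d c q = (AddMonoidAlgebra.coeff q).sum fun s a => (((s.sum fun _ e => e : ℕ) : ℝ) + c)⁻¹ • monomial s a := rfl

theorem totalDegree_scOp_le {d c : ℕ} (q : MvPolynomial (Fin d) ℝ) :
    (scOp d c q).totalDegree ≤ q.totalDegree := by
  rw [scOp_apply, Finsupp.sum]
  refine (totalDegree_finset_sum _ _).trans (Finset.sup_le fun s hs => ?_)
  refine le_trans (le_trans (totalDegree_smul_le _ _) (totalDegree_monomial_le _ _)) ?_
  exact le_totalDegree hs

theorem totalDegree_pderiv_le {d n : ℕ} (j : Fin d) (p : MvPolynomial (Fin d) ℝ)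
    (hp : p.totalDegree ≤ n + 1) : (pderiv j p).totalDegree ≤ n := by
  conv_lhs => rw [p.as_sum]
  rw [map_sum]
  refine (totalDegree_finset_sum _ _).trans (Finset.sup_le fun s hs => ?_)
  rw [pderiv_monomial]
  by_cases h : s j = 0
  · simp [h]
  · refine (totalDegree_monomial_le _ _).trans ?_
    have hd := deg_sub_single s j h
    have hst := le_totalDegree hs
    have hid : ((s - Finsupp.single j 1).sum fun (_ : Fin d) => id)
        = ((s - Finsupp.single j 1).sum fun _ e => e) := rfl
    omega

theorem pderiv_comm' {d : ℕ} (i j : Fin d) (p : MvPolynomial (Fin d) ℝ) :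
    pderiv i (pderiv j p) = pderiv j (pderiv i p) := by
  induction p using MvPolynomial.induction_on' with
  | add p q hp hq => simp [map_add, hp, hq]
  | monomial s a =>
    by_cases hij : i = j
    · subst hij; rfl
    · rw [pderiv_monomial, pderiv_monomial, pderiv_monomial, pderiv_monomial]
      have he : s - Finsupp.single j 1 - Finsupp.single i 1
          = s - Finsupp.single i 1 - Finsupp.single j 1 := by
        ext k
        simp only [Finsupp.coe_tsub, Pi.sub_apply]
        omega
      have hci : (s - Finsupp.single j 1 : Fin d →₀ ℕ) i = s i := by
        rw [Finsupp.tsub_apply, Finsupp.single_apply, if_neg (Ne.symm hij)]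
        omega
      have hcj : (s - Finsupp.single i 1 : Fin d →₀ ℕ) j = s j := by
        rw [Finsupp.tsub_apply, Finsupp.single_apply, if_neg hij]
        omega
      rw [he, hci, hcj]
      congr 1
      ring

theorem coeff_pderiv {d : ℕ} (i : Fin d) (u : Fin d →₀ ℕ) (p : MvPolynomial (Fin d) ℝ) :
    coeff u (pderiv i p) = ((u i : ℝ) + 1) * coeff (u + Finsupp.single i 1) p := by
  induction p using MvPolynomial.induction_on' with
  | add p q hp hq => simp only [map_add, coeff_add, hp, hq]; ring
  | monomial s a =>
    rw [pderiv_monomial, coeff_monomial, coeff_monomial]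
    by_cases hs : s = u + Finsupp.single i 1
    · subst hs
      have h1 : (u + Finsupp.single i 1) - Finsupp.single i 1 = u := by
        ext k
        simp only [Finsupp.coe_add, Finsupp.coe_tsub, Pi.add_apply, Pi.sub_apply,
          Finsupp.single_apply]
        by_cases hk : i = k <;> simp [hk]
      have h2 : (u + Finsupp.single i 1 : Fin d →₀ ℕ) i = u i + 1 := by simp
      rw [h1, if_pos rfl, if_pos rfl, h2]
      push_cast
      ring
    · rw [if_neg hs, mul_zero]
      by_cases hsi : s i = 0
      · rw [hsi]
        simp
      · rw [if_neg fun hc => hs (by rw [← hc]; exact (sub_single_add s i hsi).symm)]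

noncomputable def gradMap (d m : ℕ) :
    restrictTotalDegree (Fin d) ℝ (m + 1) →ₗ[ℝ] (Fin d → MvPolynomial (Fin d) ℝ) :=
  LinearMap.pi fun i => ((pderiv i).toLinearMap).comp (Submodule.subtype _)

theorem gradMap_apply {d m : ℕ} (p : restrictTotalDegree (Fin d) ℝ (m + 1)) (i : Fin d) :
    gradMap d m p i = pderiv i (p : MvPolynomial (Fin d) ℝ) := rfl

theorem range_gradMap (d m : ℕ) :
    LinearMap.range (gradMap d m) = irrotationalSpace d m := by
  apply le_antisymm
  · rintro v ⟨p, rfl⟩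
    refine ⟨fun i => ?_, fun i j => ?_⟩
    · exact totalDegree_pderiv_le i _ ((mem_restrictTotalDegree _ _ _).mp p.2)
    · exact pderiv_comm' i j _
  · rintro v ⟨hv1, hv2⟩
    set P : MvPolynomial (Fin d) ℝ := ∑ i : Fin d, X i * scOp d 1 (v i) with hP
    have hPdeg : P ∈ restrictTotalDegree (Fin d) ℝ (m + 1) := by
      rw [mem_restrictTotalDegree]
      refine (totalDegree_finset_sum _ _).trans (Finset.sup_le fun i _ => ?_)
      refine (totalDegree_mul _ _).trans ?_
      have h1 : (X i : MvPolynomial (Fin d) ℝ).totalDegree = 1 := totalDegree_X i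
      have h2 := (totalDegree_scOp_le (c := 1) (v i)).trans (hv1 i)
      omega
    refine ⟨⟨P, hPdeg⟩, ?_⟩
    funext j
    rw [gradMap_apply]
    show pderiv j P = v j
    rw [hP, map_sum]
    have hterm : ∀ i : Fin d, pderiv j (X i * scOp d 1 (v i)) =
        (pderiv j (X i)) * scOp d 1 (v i) + X i * scOp d 2 (pderiv i (v j)) := by
      intro i
      rw [pderiv_mul, pderiv_scOp, hv2 j i]
    rw [Finset.sum_congr rfl fun i _ => hterm i, Finset.sum_add_distrib,
      sum_X_mul_scOp (v j)]
    have hX : ∑ i : Fin d, (pderiv j (X i)) * scOp d 1 (v i) = scOp d 1 (v j) := by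
      rw [Finset.sum_eq_single j]
      · rw [pderiv_X_self, one_mul]
      · intro i _ hij
        rw [pderiv_X_of_ne hij, zero_mul]
      · intro h; exact absurd (Finset.mem_univ j) h
    rw [hX]
    ring

theorem eq_C_of_pderiv_eq_zero {d : ℕ} (p : MvPolynomial (Fin d) ℝ)
    (h : ∀ i, pderiv i p = 0) : p = C (coeff 0 p) := by
  apply MvPolynomial.ext
  intro s
  rcases eq_or_ne s 0 with rfl | hs
  · simp
  · obtain ⟨i, hi⟩ : ∃ i, s i ≠ 0 := by
      by_contra hc
      push_neg at hc
      exact hs (Finsupp.ext fun i => hc i)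
    have := coeff_pderiv i (s - Finsupp.single i 1) p
    rw [h i, add_comm, sub_single_add s i hi] at this
    have hne : (1 + ((s - Finsupp.single i 1 : Fin d →₀ ℕ) i : ℝ)) ≠ 0 := by positivity
    have : coeff s p = 0 := by
      have h0 := this.symm
      rw [coeff_zero] at h0
      exact (mul_eq_zero.mp h0).resolve_left hne
    rw [this, coeff_C, if_neg (Ne.symm hs)]

noncomputable def constMap (d m : ℕ) : ℝ →ₗ[ℝ] restrictTotalDegree (Fin d) ℝ (m + 1) where
  toFun c := ⟨C c, by
    rw [mem_restrictTotalDegree]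
    exact (totalDegree_C c).le.trans (Nat.zero_le _)⟩
  map_add' a b := by ext1; simp
  map_smul' a b := by ext1; simp [smul_eq_C_mul]

noncomputable def kerMap (d m : ℕ) : ℝ →ₗ[ℝ] LinearMap.ker (gradMap d m) :=
  (constMap d m).codRestrict _ fun c => by
    rw [LinearMap.mem_ker]
    funext i
    rw [gradMap_apply]
    exact pderiv_C

theorem kerMap_bijective (d m : ℕ) : Function.Bijective (kerMap d m) := by
  constructor
  · intro a b hab
    have : (C a : MvPolynomial (Fin d) ℝ) = C b :=
      congrArg (fun x : LinearMap.ker (gradMap d m) => ((x : restrictTotalDegree (Fin d) ℝ (m+1)) : MvPolynomial (Fin d) ℝ)) hab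
    exact C_injective _ _ this
  · rintro ⟨⟨p, hdeg⟩, hker⟩
    rw [LinearMap.mem_ker] at hker
    have hz : ∀ i, pderiv i p = 0 := by
      intro i
      exact congrFun hker i
    refine ⟨coeff 0 p, ?_⟩
    apply Subtype.ext
    apply Subtype.ext
    exact (eq_C_of_pderiv_eq_zero p hz).symm

def sigmaEquiv (d N : ℕ) :
    {n : Fin d →₀ ℕ // (n.sum fun _ e => e) ≤ N} ≃
      Σ k : Fin (N + 1), {n : Fin d →₀ ℕ // (n.sum fun _ e => e) = k} where
  toFun x := ⟨⟨x.1.sum fun _ e => e, Nat.lt_succ_of_le x.2⟩, ⟨x.1, rfl⟩⟩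
  invFun y := ⟨y.2.1, by rw [y.2.2]; exact Nat.le_of_lt_succ y.1.2⟩
  left_inv x := rfl
  right_inv := by
    rintro ⟨⟨k, hk⟩, ⟨n, hn⟩⟩
    have hn' : (n.sum fun _ e => e) = k := hn
    subst hn'
    rfl

noncomputable def symEquiv (d k : ℕ) :
    {n : Fin d →₀ ℕ // (n.sum fun _ e => e) = k} ≃ Sym (Fin d) k where
  toFun x := ⟨Finsupp.toMultiset x.1, by rw [Finsupp.card_toMultiset]; exact x.2⟩
  invFun s := ⟨Multiset.toFinsupp (s : Multiset (Fin d)), by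
    have h := Finsupp.card_toMultiset (Multiset.toFinsupp (s : Multiset (Fin d)))
    rw [Multiset.toFinsupp_toMultiset] at h
    exact h.symm.trans s.2⟩
  left_inv x := Subtype.ext (Finsupp.toMultiset_toFinsupp x.1)
  right_inv s := Subtype.ext (Multiset.toFinsupp_toMultiset (s : Multiset (Fin d)))

theorem card_aux (d N : ℕ) (hd : 1 ≤ d) :
    Nat.card {n : Fin d →₀ ℕ // (n.sum fun _ e => e) ≤ N} = (d + N).choose d := by
  rw [Nat.card_congr ((sigmaEquiv d N).trans (Equiv.sigmaCongrRight fun k => symEquiv d k))]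
  rw [Nat.card_eq_fintype_card, Fintype.card_sigma]
  have h1 : ∀ k : Fin (N + 1), Fintype.card (Sym (Fin d) k)
      = ((d - 1) + (k : ℕ)).choose (d - 1) := by
    intro k
    rw [Sym.card_sym_fin_eq_multichoose, Nat.multichoose_eq]
    have : d + (k : ℕ) - 1 = (d - 1) + (k : ℕ) := by omega
    rw [this, ← Nat.choose_symm (Nat.le_add_right _ _)]
    congr 1
    omega
  rw [Finset.sum_congr rfl fun k _ => h1 k,
    Fin.sum_univ_eq_sum_range (fun j => (d - 1 + j).choose (d - 1)) (N + 1)]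
  have h2 : ∑ k ∈ Finset.range (N + 1), ((d - 1) + k).choose (d - 1)
      = ∑ j ∈ Finset.Icc (d - 1) (d - 1 + N), j.choose (d - 1) := by
    rw [← Finset.Ico_add_one_right_eq_Icc, Finset.sum_Ico_eq_sum_range]
    have h3 : d - 1 + N + 1 - (d - 1) = N + 1 := by omega
    rw [h3]
  rw [h2, Nat.sum_Icc_choose]
  congr 1 <;> omega

theorem finrank_restrict (d m : ℕ) (hd : 1 ≤ d) :
    Module.finrank ℝ (restrictTotalDegree (Fin d) ℝ (m + 1)) = (d + m + 1).choose d := by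
  have hb := Module.finrank_eq_nat_card_basis
    (basisRestrictSupport ℝ {n : Fin d →₀ ℕ | (n.sum fun _ e => e) ≤ m + 1})
  have hc := card_aux d (m + 1) hd
  have : Nat.card ↥{n : Fin d →₀ ℕ | (n.sum fun _ e => e) ≤ m + 1}
      = Nat.card {n : Fin d →₀ ℕ // (n.sum fun _ e => e) ≤ m + 1} := rfl
  rw [this, hc] at hb
  exact hb


set_option maxHeartbeats 1000000 in
set_option synthInstance.maxHeartbeats 400000 in
/-- `S_m` is finite dimensional of dimension `C(d + m + 1, d) − 1`,
the dimension of polynomials of total degree ≤ m + 1 minus the constants. -/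
theorem finrank_irrotationalSpace (d m : ℕ) (hd : 1 ≤ d) :
    FiniteDimensional ℝ (irrotationalSpace d m) ∧
      Module.finrank ℝ (irrotationalSpace d m) =
        Nat.choose (d + m + 1) d - 1 := by
  have hr := range_gradMap d m
  constructor
  · rw [← hr]
    infer_instance
  · have hrn := LinearMap.finrank_range_add_finrank_ker (gradMap d m)
    have hker : Module.finrank ℝ (LinearMap.ker (gradMap d m)) = 1 := by
      rw [← LinearEquiv.finrank_eq (LinearEquiv.ofBijective (kerMap d m) (kerMap_bijective d m))]
      exact Module.finrank_self ℝ
    have hdom := finrank_restrict d m hd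
    have hpos : 1 ≤ (d + m + 1).choose d := Nat.choose_pos (by omega)
    rw [← hr]
    omega
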